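/- Let r ≥ 1 be an integer and let γ₁,…,γ_r ∈ M_r(ℂ) be matrices commuting with f such that Tr(γ_i L_j) = δ_{ij} for all 1 ≤ i,j ≤ r. Then for all 1 ≤ i,j ≤ r, 0 ≤ I ≤ i−1 and 0 ≤ J ≤ j−1, the following orthogonality relation holds: Tr( ((1/I!)·ad_{L₂}^I(γ_i)) · (ad_f^J(L_j)) ) = (−1)^I · (2i−2)!/(2i−I−2)! if i = j and I = J, and equals 0 otherwise. -/

import Mathlib

open Matrix

/-- The regular nilpotent element `L₂ = Σ_{i=1}^{r−1} ε_{i,i+1}` (0-based indexing). -/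
noncomputable def L2Mat (r : ℕ) : Matrix (Fin r) (Fin r) ℂ :=
  Matrix.of fun a b => if (a : ℕ) + 1 = (b : ℕ) then 1 else 0

/-- The nilpotent element `f = Σ_{i=1}^{r−1} i(r−i) ε_{i+1,i}`. -/
noncomputable def fMat (r : ℕ) : Matrix (Fin r) (Fin r) ℂ :=
  Matrix.of fun a b =>
    if (b : ℕ) + 1 = (a : ℕ) then (((b : ℕ) : ℂ) + 1) * ((r : ℂ) - (((b : ℕ) : ℂ) + 1)) else 0

/-- `L_i = Σ_{k=1}^{r−i+1} ε_{k,i−1+k}` (1-based `i`). -/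
noncomputable def LMat (r i : ℕ) : Matrix (Fin r) (Fin r) ℂ :=
  Matrix.of fun a b => if (b : ℕ) = (a : ℕ) + (i - 1) then 1 else 0

/-- `ad_X(Y) = [X, Y] = XY − YX`. -/
noncomputable def adM {r : ℕ} (X : Matrix (Fin r) (Fin r) ℂ) :
    Matrix (Fin r) (Fin r) ℂ → Matrix (Fin r) (Fin r) ℂ :=
  fun Y => X * Y - Y * X

set_option linter.unusedVariables false

noncomputable def hMat (r : ℕ) : Matrix (Fin r) (Fin r) ℂ :=
  Matrix.diagonal fun a => (r : ℂ) - 1 - 2 * ((a : ℕ) : ℂ)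

variable {r : ℕ}

lemma L2_mul_apply (M : Matrix (Fin r) (Fin r) ℂ) (a b : Fin r) :
    (L2Mat r * M) a b = if h : (a : ℕ) + 1 < r then M ⟨(a : ℕ) + 1, h⟩ b else 0 := by
  rw [Matrix.mul_apply]
  split_ifs with h
  · rw [Finset.sum_eq_single (⟨(a : ℕ) + 1, h⟩ : Fin r)]
    · simp [L2Mat]
    · intro c _ hc
      simp only [L2Mat, of_apply]
      rw [if_neg, zero_mul]
      intro hc'; exact hc (Fin.ext hc'.symm)
    · simp
  · apply Finset.sum_eq_zero; intro c _
    simp only [L2Mat, of_apply]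
    rw [if_neg, zero_mul]
    intro hc'; exact h (hc' ▸ c.isLt)

lemma mul_L2_apply (M : Matrix (Fin r) (Fin r) ℂ) (a b : Fin r) :
    (M * L2Mat r) a b =
      if h : 0 < (b : ℕ) then M a ⟨(b : ℕ) - 1, by omega⟩ else 0 := by
  rw [Matrix.mul_apply]
  split_ifs with h
  · rw [Finset.sum_eq_single (⟨(b : ℕ) - 1, by omega⟩ : Fin r)]
    · simp only [L2Mat, of_apply]
      rw [if_pos (show (b:ℕ) - 1 + 1 = (b:ℕ) by omega), mul_one]
    · intro c _ hc
      simp only [L2Mat, of_apply]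
      rw [if_neg, mul_zero]
      intro hc'; exact hc (Fin.ext (show (c:ℕ) = (b:ℕ) - 1 by omega))
    · simp
  · apply Finset.sum_eq_zero; intro c _
    simp only [L2Mat, of_apply]
    rw [if_neg, mul_zero]
    omega

lemma f_mul_apply (M : Matrix (Fin r) (Fin r) ℂ) (a b : Fin r) :
    (fMat r * M) a b =
      if h : 0 < (a : ℕ) then
        ((a : ℕ) : ℂ) * ((r : ℂ) - ((a : ℕ) : ℂ)) * M ⟨(a : ℕ) - 1, by omega⟩ b
      else 0 := by
  rw [Matrix.mul_apply]
  split_ifs with h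
  · rw [Finset.sum_eq_single (⟨(a : ℕ) - 1, by omega⟩ : Fin r)]
    · simp only [fMat, of_apply]
      rw [if_pos (show (a:ℕ) - 1 + 1 = (a:ℕ) by omega)]
      have h1 : ((((a:ℕ) - 1 : ℕ) : ℂ)) = ((a:ℕ) : ℂ) - 1 := by
        push_cast [Nat.cast_sub h]; ring
      rw [h1]; ring
    · intro c _ hc
      simp only [fMat, of_apply]
      rw [if_neg, zero_mul]
      intro hc'; exact hc (Fin.ext (show (c:ℕ) = (a:ℕ) - 1 by omega))
    · simp
  · apply Finset.sum_eq_zero; intro c _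
    simp only [fMat, of_apply]
    rw [if_neg, zero_mul]
    omega

lemma mul_f_apply (M : Matrix (Fin r) (Fin r) ℂ) (a b : Fin r) :
    (M * fMat r) a b =
      if h : (b : ℕ) + 1 < r then
        (((b : ℕ) : ℂ) + 1) * ((r : ℂ) - (((b : ℕ) : ℂ) + 1)) * M a ⟨(b : ℕ) + 1, h⟩
      else 0 := by
  rw [Matrix.mul_apply]
  split_ifs with h
  · rw [Finset.sum_eq_single (⟨(b : ℕ) + 1, h⟩ : Fin r)]
    · simp only [fMat, of_apply]
      rw [if_pos (by simp)]
      ring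
    · intro c _ hc
      simp only [fMat, of_apply]
      rw [if_neg, mul_zero]
      intro hc'; exact hc (Fin.ext (show (c:ℕ) = (b:ℕ) + 1 by omega))
    · simp
  · apply Finset.sum_eq_zero; intro c _
    simp only [fMat, of_apply]
    rw [if_neg, mul_zero]
    intro hc'; have := c.isLt; omega

lemma h_mul_apply (M : Matrix (Fin r) (Fin r) ℂ) (a b : Fin r) :
    (hMat r * M) a b = ((r : ℂ) - 1 - 2 * ((a : ℕ) : ℂ)) * M a b := by
  simp [hMat, Matrix.diagonal_mul]

lemma mul_h_apply (M : Matrix (Fin r) (Fin r) ℂ) (a b : Fin r) :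
    (M * hMat r) a b = M a b * ((r : ℂ) - 1 - 2 * ((b : ℕ) : ℂ)) := by
  simp [hMat, Matrix.mul_diagonal]

lemma ad_e_L (j : ℕ) : adM (L2Mat r) (LMat r j) = 0 := by
  ext a b
  simp only [adM, Matrix.sub_apply, Matrix.zero_apply, L2_mul_apply, mul_L2_apply, LMat,
    of_apply, Fin.val_mk]
  have hb := b.isLt
  split_ifs <;> first | (exfalso; omega) | simp

lemma cast_pred {n : ℕ} (h : 0 < n) : ((n - 1 : ℕ) : ℂ) = (n : ℂ) - 1 := by
  push_cast [Nat.cast_sub h]; ring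

lemma ad_e_f : adM (L2Mat r) (fMat r) = hMat r := by
  ext a b
  by_cases hab : a = b
  · subst hab
    simp only [adM, Matrix.sub_apply, L2_mul_apply, mul_L2_apply, hMat, diagonal_apply_eq,
      fMat, of_apply, Fin.val_mk]
    by_cases h1 : (a : ℕ) + 1 < r
    · rw [dif_pos h1]; simp only [if_true]
      by_cases h2 : 0 < (a : ℕ)
      · rw [dif_pos h2, if_pos (show (a:ℕ) - 1 + 1 = (a:ℕ) by omega), cast_pred h2]
        ring
      · rw [dif_neg h2]
        rw [show ((a:ℕ) : ℂ) = 0 by rw [show (a:ℕ) = 0 by omega]; simp]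
        ring
    · have har : (a:ℕ) + 1 = r := by have := a.isLt; omega
      have hr : ((r:ℕ) : ℂ) = ((a:ℕ) : ℂ) + 1 := by exact_mod_cast congrArg Nat.cast har.symm
      rw [dif_neg h1]
      by_cases h2 : 0 < (a : ℕ)
      · rw [dif_pos h2, if_pos (show (a:ℕ) - 1 + 1 = (a:ℕ) by omega), cast_pred h2, hr]
        ring
      · rw [dif_neg h2]
        rw [show ((a:ℕ) : ℂ) = 0 by rw [show (a:ℕ) = 0 by omega]; simp] at hr ⊢
        rw [hr]; ring
  · have hne : (a:ℕ) ≠ (b:ℕ) := fun h => hab (Fin.ext h)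
    simp only [adM, Matrix.sub_apply, L2_mul_apply, mul_L2_apply, hMat,
      diagonal_apply_ne _ hab, fMat, of_apply, Fin.val_mk]
    split_ifs <;> first | (exfalso; omega) | ring1

lemma ad_h_f : adM (hMat r) (fMat r) = (-2 : ℂ) • fMat r := by
  ext a b
  simp only [adM, Matrix.sub_apply, h_mul_apply, mul_h_apply, Matrix.smul_apply, fMat, of_apply,
    smul_eq_mul]
  split_ifs with h
  · have : ((a:ℕ) : ℂ) = ((b:ℕ) : ℂ) + 1 := by exact_mod_cast congrArg Nat.cast h.symm
    rw [this]; ring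
  · ring

lemma ad_h_L (j : ℕ) (hj : 1 ≤ j) :
    adM (hMat r) (LMat r j) = (2 * (j : ℂ) - 2) • LMat r j := by
  ext a b
  simp only [adM, Matrix.sub_apply, h_mul_apply, mul_h_apply, Matrix.smul_apply, LMat, of_apply,
    smul_eq_mul]
  split_ifs with h
  · have : ((b:ℕ) : ℂ) = ((a:ℕ) : ℂ) + ((j : ℂ) - 1) := by
      rw [show ((j:ℂ) - 1) = ((j - 1 : ℕ) : ℂ) by push_cast [Nat.cast_sub hj]; ring]
      exact_mod_cast congrArg Nat.cast h
    rw [this]; ring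
  · ring

lemma adM_smul (X : Matrix (Fin r) (Fin r) ℂ) (c : ℂ) (M : Matrix (Fin r) (Fin r) ℂ) :
    adM X (c • M) = c • adM X M := by
  simp only [adM, Matrix.mul_smul, Matrix.smul_mul, smul_sub]

lemma adM_smul_left (X : Matrix (Fin r) (Fin r) ℂ) (c : ℂ) (M : Matrix (Fin r) (Fin r) ℂ) :
    adM (c • X) M = c • adM X M := by
  simp only [adM, Matrix.mul_smul, Matrix.smul_mul, smul_sub]

lemma adM_braid (X Y Z : Matrix (Fin r) (Fin r) ℂ) :
    adM X (adM Y Z) = adM Y (adM X Z) + adM (X * Y - Y * X) Z := by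
  simp only [adM]; noncomm_ring

-- `ad_h (ad_f^J L_j) = (2j-2-2J) • ad_f^J L_j`
lemma ad_h_fJ (j : ℕ) (hj : 1 ≤ j) (J : ℕ) :
    adM (hMat r) ((adM (fMat r))^[J] (LMat r j)) =
      (2 * (j : ℂ) - 2 - 2 * J) • (adM (fMat r))^[J] (LMat r j) := by
  induction J with
  | zero => simpa using ad_h_L j hj
  | succ J ih =>
      rw [Function.iterate_succ_apply', adM_braid (hMat r) (fMat r),
        show hMat r * fMat r - fMat r * hMat r = adM (hMat r) (fMat r) from rfl, ad_h_f, ih,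
        adM_smul, adM_smul_left]
      push_cast
      module

-- `ad_e (ad_f^(K+1) L_j) = (K+1)(2j-1-(K+1)) • ad_f^K L_j`
lemma ad_e_fJ (j : ℕ) (hj : 1 ≤ j) (K : ℕ) :
    adM (L2Mat r) ((adM (fMat r))^[K + 1] (LMat r j)) =
      (((K : ℂ) + 1) * (2 * (j : ℂ) - 1 - ((K : ℂ) + 1))) • (adM (fMat r))^[K] (LMat r j) := by
  induction K with
  | zero =>
      rw [Function.iterate_succ_apply', Function.iterate_zero_apply,
        adM_braid (L2Mat r) (fMat r),
        show L2Mat r * fMat r - fMat r * L2Mat r = adM (L2Mat r) (fMat r) from rfl, ad_e_f,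
        ad_e_L, ad_h_L j hj]
      simp only [adM, Matrix.mul_zero, Matrix.zero_mul, sub_zero, zero_sub, neg_zero, zero_add]
      module
  | succ K ih =>
      rw [Function.iterate_succ_apply' (adM (fMat r)) (K + 1),
        adM_braid (L2Mat r) (fMat r),
        show L2Mat r * fMat r - fMat r * L2Mat r = adM (L2Mat r) (fMat r) from rfl, ad_e_f,
        ih, ad_h_fJ j hj, adM_smul, ← Function.iterate_succ_apply' (adM (fMat r)) K]
      push_cast
      module

/-- coefficient in `ad_e^I (ad_f^J L_j) = cf j J I • ad_f^(J-I) L_j` -/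
noncomputable def cf (j J : ℕ) : ℕ → ℂ
  | 0 => 1
  | (I + 1) => cf j J I * (((J - I : ℕ) : ℂ) * (2 * (j : ℂ) - 1 - ((J - I : ℕ) : ℂ)))

lemma ad_eI_fJ (j : ℕ) (hj : 1 ≤ j) (J : ℕ) : ∀ I : ℕ,
    (adM (L2Mat r))^[I] ((adM (fMat r))^[J] (LMat r j)) =
      cf j J I • (adM (fMat r))^[J - I] (LMat r j) := by
  intro I
  induction I with
  | zero => simp [cf]
  | succ I ih =>
      rw [Function.iterate_succ_apply', ih, adM_smul]
      rcases Nat.eq_zero_or_pos (J - I) with h0 | hpos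
      · rw [h0, Function.iterate_zero_apply, ad_e_L,
          show J - (I + 1) = 0 by omega, Function.iterate_zero_apply,
          show cf j J (I + 1) = 0 by rw [cf, h0]; simp]
        simp
      · obtain ⟨K, hK⟩ : ∃ K, J - I = K + 1 := ⟨J - I - 1, by omega⟩
        rw [hK, ad_e_fJ j hj K, show J - (I + 1) = K by omega, cf, hK]
        push_cast
        module

lemma trace_adM (X A B : Matrix (Fin r) (Fin r) ℂ) :
    (adM X A * B).trace = -(A * adM X B).trace := by
  simp only [adM, Matrix.sub_mul, Matrix.mul_sub, trace_sub]
  rw [show X * A * B = X * (A * B) by rw [Matrix.mul_assoc], trace_mul_comm X (A * B)]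
  rw [Matrix.mul_assoc, Matrix.mul_assoc]
  ring

lemma trace_adM_iter (X : Matrix (Fin r) (Fin r) ℂ) (I : ℕ) (A : Matrix (Fin r) (Fin r) ℂ) :
    ∀ B, ((adM X)^[I] A * B).trace = (-1 : ℂ) ^ I * (A * (adM X)^[I] B).trace := by
  induction I with
  | zero => intro B; simp
  | succ I ih =>
      intro B
      rw [Function.iterate_succ_apply' (adM X) I A, trace_adM, ih (adM X B),
        ← Function.iterate_succ_apply (adM X) I B]
      ring

lemma trace_comm_adM (g M : Matrix (Fin r) (Fin r) ℂ) (h : g * fMat r = fMat r * g) :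
    (g * adM (fMat r) M).trace = 0 := by
  simp only [adM, Matrix.mul_sub, trace_sub]
  rw [← Matrix.mul_assoc, h, ← Matrix.mul_assoc, trace_mul_cycle g M (fMat r)]
  ring

lemma cf_eq_zero (j : ℕ) : ∀ I J : ℕ, J < I → cf j J I = 0 := by
  intro I
  induction I with
  | zero => omega
  | succ I ih =>
      intro J hJ
      rcases Nat.lt_or_ge J I with h | h
      · rw [cf, ih J h, zero_mul]
      · have : J = I := by omega
        rw [cf, this, Nat.sub_self]
        simp

lemma cf_val (j m : ℕ) (hm : ((m : ℕ) : ℂ) = 2 * (j : ℂ) - 2) :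
    ∀ I J : ℕ, I ≤ J → J ≤ m →
      cf j J I * ((J - I).factorial : ℂ) * ((m - J).factorial : ℂ) =
        (J.factorial : ℂ) * ((m - J + I).factorial : ℂ) := by
  intro I
  induction I with
  | zero => intro J _ _; simp [cf]
  | succ I ih =>
      intro J hIJ hJm
      obtain ⟨k, hk⟩ : ∃ k, J - I = k + 1 := ⟨J - I - 1, by omega⟩
      have h1 : J - (I + 1) = k := by omega
      have h2 : m - J + (I + 1) = (m - J + I) + 1 := by omega
      have h3 : (J - I).factorial = (k + 1) * k.factorial := by rw [hk, Nat.factorial_succ]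
      have h4 : ((m - J + I) + 1).factorial = ((m - J + I) + 1) * (m - J + I).factorial :=
        Nat.factorial_succ _
      have hIJ' : I ≤ J := by omega
      have h5 : ((m - J + I : ℕ) : ℂ) + 1 = 2 * (j : ℂ) - 1 - ((J - I : ℕ) : ℂ) := by
        push_cast [Nat.cast_sub hIJ', Nat.cast_sub hJm]
        linear_combination hm
      have key := ih J hIJ' hJm
      have h3' : (k + 1).factorial = (k + 1) * k.factorial := Nat.factorial_succ k
      rw [hk, h3'] at key
      rw [cf, h1, h2, h4, ← h5, hk]
      push_cast [Nat.cast_sub hJm] at key ⊢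
      linear_combination ((m : ℂ) - (J : ℂ) + (I : ℂ) + 1) * key

/-- orthogonality relation
`Tr( (1/I!)·ad_{L₂}^I(γ_i) · ad_f^J(L_j) ) = (−1)^I (2i−2)!/(2i−I−2)! δ_{ij} δ^{IJ}`. -/
theorem orthogonality_relation (r : ℕ) (hr : 1 ≤ r)
    (γ : ℕ → Matrix (Fin r) (Fin r) ℂ)
    (hcomm : ∀ i : ℕ, 1 ≤ i → i ≤ r → γ i * fMat r = fMat r * γ i)
    (htr : ∀ i j : ℕ, 1 ≤ i → i ≤ r → 1 ≤ j → j ≤ r →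
      (γ i * LMat r j).trace = if i = j then 1 else 0) :
    ∀ i j I J : ℕ, 1 ≤ i → i ≤ r → 1 ≤ j → j ≤ r → I ≤ i - 1 → J ≤ j - 1 →
      ((((1 : ℂ) / (Nat.factorial I : ℂ)) • ((adM (L2Mat r))^[I] (γ i))) *
          ((adM (fMat r))^[J] (LMat r j))).trace =
        if i = j ∧ I = J then
          (-1 : ℂ) ^ I * ((Nat.factorial (2 * i - 2) : ℂ) / (Nat.factorial (2 * i - I - 2) : ℂ))
        else 0 := by
  intro i j I J hi1 hir hj1 hjr hI hJ
  rw [Matrix.smul_mul, trace_smul, smul_eq_mul,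
    trace_adM_iter (L2Mat r) I (γ i) ((adM (fMat r))^[J] (LMat r j)),
    ad_eI_fJ j hj1 J I, Matrix.mul_smul, trace_smul, smul_eq_mul]
  by_cases hIJ : I = J
  · subst hIJ
    rw [Nat.sub_self, Function.iterate_zero_apply, htr i j hi1 hir hj1 hjr]
    by_cases hij : i = j
    · subst hij
      rw [if_pos rfl, if_pos ⟨rfl, rfl⟩, mul_one]
      have hm : (((2 * i - 2 : ℕ)) : ℂ) = 2 * (i : ℂ) - 2 := by
        push_cast [Nat.cast_sub (show 2 ≤ 2 * i by omega)]; ring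
      have hIm : I ≤ 2 * i - 2 := by omega
      have hv := cf_val i (2 * i - 2) hm I I le_rfl hIm
      rw [Nat.sub_self, Nat.factorial_zero, Nat.cast_one, mul_one,
        show 2 * i - 2 - I + I = 2 * i - 2 by omega] at hv
      rw [show 2 * i - I - 2 = 2 * i - 2 - I by omega]
      have hf1 : ((I.factorial : ℂ)) ≠ 0 := Nat.cast_ne_zero.2 (Nat.factorial_ne_zero I)
      have hf2 : (((2 * i - 2 - I).factorial : ℂ)) ≠ 0 :=
        Nat.cast_ne_zero.2 (Nat.factorial_ne_zero _)
      field_simp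
      linear_combination hv
    · rw [if_neg hij, if_neg (by tauto), mul_zero, mul_zero, mul_zero]
  · rw [if_neg (by tauto)]
    rcases Nat.lt_or_ge I J with h | h
    · obtain ⟨K, hK⟩ : ∃ K, J - I = K + 1 := ⟨J - I - 1, by omega⟩
      rw [hK, Function.iterate_succ_apply' (adM (fMat r)) K,
        trace_comm_adM (γ i) _ (hcomm i hi1 hir)]
      ring
    · rw [cf_eq_zero j I J (by omega)]
      ring
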